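/- For every natural number n ≥ 2, ∑_{k=1}^{n-2} (-1)^{k+1} (1/k) · C(n, k+2) = ∑_{k=1}^{n-2} (1/k) · C(n-k, 2), as rational numbers. -/

import Mathlib

open Finset

lemma alt (n : ℕ) : ∑ k ∈ range (n+1), (-1:ℚ)^k * ((n+1).choose (k+1)) = 1 := by
  have h := add_pow (-1 : ℚ) 1 (n+1)
  simp only [one_pow, mul_one, neg_add_cancel] at h
  rw [zero_pow (Nat.succ_ne_zero n)] at h
  rw [Finset.sum_range_succ'] at h
  simp only [pow_zero, Nat.choose_zero_right, Nat.cast_one, one_mul] at h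
  have h2 : ∑ i ∈ range (n+1), (-1:ℚ)^(i+1) * ((n+1).choose (i+1)) = -1 := by
    linarith [h]
  calc ∑ k ∈ range (n+1), (-1:ℚ)^k * ((n+1).choose (k+1))
      = -∑ i ∈ range (n+1), (-1:ℚ)^(i+1) * ((n+1).choose (i+1)) := by
        rw [← Finset.sum_neg_distrib]
        apply Finset.sum_congr rfl
        intro k _
        ring
    _ = 1 := by rw [h2]; ring

lemma H1 (n : ℕ) : ∑ k ∈ range n, (-1:ℚ)^k / (k+1) * (n.choose (k+1)) =
    ∑ k ∈ range n, (1:ℚ) / (k+1) := by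
  induction n with
  | zero => simp
  | succ n ih =>
    have key : ∀ k ∈ range (n+1), (-1:ℚ)^k / (k+1) * ((n+1).choose (k+1)) =
        (-1:ℚ)^k / (k+1) * (n.choose (k+1)) + (-1:ℚ)^k / (k+1) * (n.choose k) := by
      intro k _
      rw [Nat.choose_succ_succ]
      push_cast
      ring
    rw [Finset.sum_congr rfl key, Finset.sum_add_distrib]
    have e1 : ∑ k ∈ range (n+1), (-1:ℚ)^k / (k+1) * (n.choose (k+1)) =
        ∑ k ∈ range n, (-1:ℚ)^k / (k+1) * (n.choose (k+1)) := by
      rw [Finset.sum_range_succ, Nat.choose_succ_self]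
      simp
    have e2 : ∑ k ∈ range (n+1), (-1:ℚ)^k / (k+1) * (n.choose k) = 1/(n+1) := by
      have step : ∀ k ∈ range (n+1), (-1:ℚ)^k / (k+1) * (n.choose k) =
          (1/(n+1)) * ((-1:ℚ)^k * ((n+1).choose (k+1))) := by
        intro k hk
        have h := Nat.add_one_mul_choose_eq n k
        have hq : ((n:ℚ)+1) * (n.choose k) = ((n+1).choose (k+1)) * ((k:ℚ)+1) := by
          exact_mod_cast congrArg (Nat.cast : ℕ → ℚ) h
        have hk1 : ((k:ℚ)+1) ≠ 0 := by positivity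
        have hn1 : ((n:ℚ)+1) ≠ 0 := by positivity
        field_simp
        linear_combination hq
      rw [Finset.sum_congr rfl step, ← Finset.mul_sum, alt n]
      ring
    rw [e1, e2, ih, Finset.sum_range_succ]
    try push_cast
    try ring

lemma H2 (n : ℕ) : ∑ k ∈ range n, (-1:ℚ)^k / (k+1) * (n.choose (k+2)) =
    ∑ k ∈ range n, ((n:ℚ) - (k+1)) / (k+1) := by
  induction n with
  | zero => simp
  | succ n ih =>
    have key : ∀ k ∈ range (n+1), (-1:ℚ)^k / (k+1) * ((n+1).choose (k+2)) =
        (-1:ℚ)^k / (k+1) * (n.choose (k+2)) + (-1:ℚ)^k / (k+1) * (n.choose (k+1)) := by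
      intro k _
      rw [Nat.choose_succ_succ n (k+1)]
      push_cast
      ring
    rw [Finset.sum_congr rfl key, Finset.sum_add_distrib]
    have e1 : ∑ k ∈ range (n+1), (-1:ℚ)^k / (k+1) * (n.choose (k+2)) =
        ∑ k ∈ range n, (-1:ℚ)^k / (k+1) * (n.choose (k+2)) := by
      rw [Finset.sum_range_succ]
      have : n.choose (n+2) = 0 := Nat.choose_eq_zero_of_lt (by omega)
      simp [this]
    have e2 : ∑ k ∈ range (n+1), (-1:ℚ)^k / (k+1) * (n.choose (k+1)) =
        ∑ k ∈ range n, (1:ℚ) / (k+1) := by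
      rw [Finset.sum_range_succ, Nat.choose_succ_self]
      simpa using H1 n
    rw [e1, e2, ih, ← Finset.sum_add_distrib, Finset.sum_range_succ]
    push_cast
    have tw : ∀ k ∈ range n, ((n:ℚ) - (k+1)) / (k+1) + 1/(k+1) = ((n:ℚ)+1 - (k+1)) / (k+1) := by
      intro k _
      have hk1 : ((k:ℚ)+1) ≠ 0 := by positivity
      field_simp
      ring
    rw [Finset.sum_congr rfl tw]
    simp

lemma M (m : ℕ) : ∑ k ∈ range m, (-1:ℚ)^k / (k+1) * ((m+2).choose (k+3)) =
    ∑ k ∈ range m, (1:ℚ) / (k+1) * ((m+1-k).choose 2) := by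
  induction m with
  | zero => simp
  | succ m ih =>
    have key : ∀ k ∈ range (m+1), (-1:ℚ)^k / (k+1) * ((m+1+2).choose (k+3)) =
        (-1:ℚ)^k / (k+1) * ((m+2).choose (k+3)) + (-1:ℚ)^k / (k+1) * ((m+2).choose (k+2)) := by
      intro k _
      rw [show m+1+2 = (m+2)+1 from rfl, Nat.choose_succ_succ (m+2) (k+2)]
      push_cast
      ring
    rw [Finset.sum_congr rfl key, Finset.sum_add_distrib]
    have e1 : ∑ k ∈ range (m+1), (-1:ℚ)^k / (k+1) * ((m+2).choose (k+3)) =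
        ∑ k ∈ range m, (-1:ℚ)^k / (k+1) * ((m+2).choose (k+3)) := by
      rw [Finset.sum_range_succ]
      have : (m+2).choose (m+3) = 0 := Nat.choose_eq_zero_of_lt (by omega)
      simp [this]
    have e2 : ∑ k ∈ range (m+1), (-1:ℚ)^k / (k+1) * ((m+2).choose (k+2)) =
        ∑ k ∈ range (m+1), ((m:ℚ)+2 - (k+1)) / (k+1) := by
      have hL : (∑ k ∈ range (m+2), (-1:ℚ)^k/(k+1) * ((m+2).choose (k+2))) =
          ∑ k ∈ range (m+1), (-1:ℚ)^k / (k+1) * ((m+2).choose (k+2)) := by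
        rw [Finset.sum_range_succ]
        have z1 : (m+2).choose (m+1+2) = 0 := Nat.choose_eq_zero_of_lt (by omega)
        simp [z1]
      have hR : (∑ k ∈ range (m+2), ((m:ℚ)+2 - (k+1))/(k+1)) =
          ∑ k ∈ range (m+1), ((m:ℚ)+2 - (k+1)) / (k+1) := by
        rw [Finset.sum_range_succ]
        norm_num
        try exact Or.inl (by ring)
      rw [← hL, ← hR]
      have h := H2 (m+2)
      push_cast at h
      convert h using 1
    rw [e1, e2, ih]
    rw [Finset.sum_range_succ, Finset.sum_range_succ]
    have tw : ∀ k ∈ range m, (1:ℚ)/(k+1) * (((m+1+1-k).choose 2 : ℕ) : ℚ) =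
        (1:ℚ)/((k:ℚ)+1) * ((m+1-k).choose 2) + ((m:ℚ)+2 - (k+1))/(k+1) := by
      intro k hk
      have hkm : k < m := Finset.mem_range.mp hk
      have h1 : m+1+1-k = (m+1-k)+1 := by omega
      rw [h1, Nat.choose_succ_succ (m+1-k) 1, Nat.choose_one_right]
      have hc : ((m+1-k : ℕ) : ℚ) = (m:ℚ)+1-k := by
        have hle : k ≤ m+1 := by omega
        push_cast [Nat.cast_sub hle]
        ring
      push_cast [hc]
      have hk1 : ((k:ℚ)+1) ≠ 0 := by positivity
      field_simp
      ring
    rw [Finset.sum_congr rfl tw, Finset.sum_add_distrib]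
    have last : ((m:ℚ)+2 - ((m:ℚ)+1))/((m:ℚ)+1) = (1:ℚ)/((m:ℚ)+1) * (((m+1+1-m).choose 2 : ℕ) : ℚ) := by
      have : m+1+1-m = 2 := by omega
      rw [this]
      norm_num
    try push_cast
    try push_cast at last
    try linarith [last]

theorem euler_case3 (n : ℕ) (hn : 2 ≤ n) :
    ∑ k ∈ Finset.Icc 1 (n - 2), (-1 : ℚ) ^ (k + 1) * (1 / k) * (n.choose (k + 2)) =
      ∑ k ∈ Finset.Icc 1 (n - 2), (1 / k : ℚ) * ((n - k).choose 2) := by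
  obtain ⟨m, rfl⟩ : ∃ m, n = m + 2 := ⟨n - 2, by omega⟩
  have hIcc : Finset.Icc 1 (m+2-2) = Finset.Ico 1 (m+1) := by
    rw [← Finset.Ico_add_one_right_eq_Icc]
    try congr 1
    try omega
  rw [hIcc, Finset.sum_Ico_eq_sum_range, Finset.sum_Ico_eq_sum_range]
  have hM := M m
  calc ∑ i ∈ range (m+1-1), (-1:ℚ)^((1+i)+1) * (1/(1+i:ℕ)) * ((m+2).choose ((1+i)+2))
      = ∑ k ∈ range m, (-1:ℚ)^k / (k+1) * ((m+2).choose (k+3)) := by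
        rw [show m+1-1 = m from rfl]
        apply Finset.sum_congr rfl
        intro k _
        have : (1+k)+2 = k+3 := by omega
        rw [this]
        push_cast
        rw [show (-1:ℚ)^(1+k+1) = (-1)^k by rw [show 1+k+1 = k+2 from by omega]; rw [pow_add]; norm_num]
        ring
    _ = ∑ k ∈ range m, (1:ℚ)/(k+1) * ((m+1-k).choose 2) := hM
    _ = ∑ i ∈ range (m+1-1), (1/(1+i:ℕ) : ℚ) * ((m+2-(1+i)).choose 2) := by
        rw [show m+1-1 = m from rfl]
        apply Finset.sum_congr rfl
        intro k _
        have : m+2-(1+k) = m+1-k := by omega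
        rw [this]
        push_cast
        ring
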